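/- Under the hypotheses that a quadratic form h = Σᵢ aᵢxᵢ² + Σ_{i<j} a_{ij}xᵢxⱼ vanishes on all 0/1 points with exactly m and exactly m+1 ones (n ≥ 4, m = ⌊n/2⌋), all off-diagonal coefficients a_{ij} (i < j) are equal to a common value u, and every diagonal coefficient satisfies aᵢ = −m·u. -/

import Mathlib

open Finset

section aux
variable {n : ℕ} (a : Fin n → ℝ) (b : Fin n → Fin n → ℝ)

noncomputable def Bsym (i j : Fin n) : ℝ := if i < j then b i j else b j i

noncomputable def Fval (S : Finset (Fin n)) : ℝ :=
  ∑ i ∈ S, a i + ∑ i ∈ S, ∑ j ∈ S.filter (i < ·), b i j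

lemma Bsym_symm {i j : Fin n} (h : i ≠ j) : Bsym b i j = Bsym b j i := by
  rcases lt_or_gt_of_ne h with h' | h'
  · simp [Bsym, h', not_lt.2 h'.le]
  · simp [Bsym, h', not_lt.2 h'.le]

lemma Fval_insert (S : Finset (Fin n)) {i : Fin n} (hi : i ∉ S) :
    Fval a b (insert i S) = Fval a b S + a i + ∑ j ∈ S, Bsym b i j := by
  unfold Fval
  rw [sum_insert hi, sum_insert hi, filter_insert]
  have h1 : ¬ (i < i) := lt_irrefl i
  rw [if_neg h1]
  have h2 : ∀ p ∈ S, ∑ j ∈ (insert i S).filter (p < ·), b p j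
      = (∑ j ∈ S.filter (p < ·), b p j) + (if p < i then b p i else 0) := by
    intro p hp
    rw [filter_insert]
    by_cases hpi : p < i
    · rw [if_pos hpi, sum_insert (by simp [hi]), if_pos hpi]; ring
    · rw [if_neg hpi, if_neg hpi]; ring
  rw [sum_congr rfl h2, sum_add_distrib]
  have h3 : (∑ j ∈ S.filter (i < ·), b i j) + ∑ p ∈ S, (if p < i then b p i else 0)
      = ∑ j ∈ S, Bsym b i j := by
    rw [sum_filter, ← sum_add_distrib]
    refine sum_congr rfl fun j hj => ?_
    have hji : j ≠ i := fun h => hi (h ▸ hj)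
    rcases lt_or_gt_of_ne hji with h' | h'
    · simp [Bsym, h', not_lt.2 h'.le]
    · simp [Bsym, h', not_lt.2 h'.le]
  ring_nf
  ring_nf at h3
  linarith [h3]

lemma eval_indicator (S : Finset (Fin n)) :
    (∑ i : Fin n, a i * (if i ∈ S then (1:ℝ) else 0) ^ 2)
      + ∑ i : Fin n, ∑ j ∈ Ioi i, b i j * (if i ∈ S then (1:ℝ) else 0) * (if j ∈ S then (1:ℝ) else 0)
      = Fval a b S := by
  unfold Fval
  congr 1
  · rw [← Finset.sum_filter_add_sum_filter_not univ (· ∈ S)]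
    have : ∑ i ∈ univ.filter (· ∉ S), a i * (if i ∈ S then (1:ℝ) else 0) ^ 2 = 0 := by
      refine sum_eq_zero fun i hi => ?_
      simp at hi; simp [hi]
    rw [this, add_zero]
    have huniv : univ.filter (· ∈ S) = S := by ext i; simp
    rw [huniv]
    refine sum_congr rfl fun i hi => by simp [hi]
  · rw [← Finset.sum_filter_add_sum_filter_not univ (· ∈ S)]
    have : ∑ i ∈ univ.filter (· ∉ S), ∑ j ∈ Ioi i,
        b i j * (if i ∈ S then (1:ℝ) else 0) * (if j ∈ S then (1:ℝ) else 0) = 0 := by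
      refine sum_eq_zero fun i hi => sum_eq_zero fun j hj => ?_
      simp at hi; simp [hi]
    rw [this, add_zero]
    have huniv : univ.filter (· ∈ S) = S := by ext i; simp
    rw [huniv]
    refine sum_congr rfl fun i hi => ?_
    have hIoi : S.filter (i < ·) = (Ioi i).filter (· ∈ S) := by
      ext j; simp [and_comm]
    rw [hIoi, sum_filter]
    refine sum_congr rfl fun j hj => ?_
    by_cases hjS : j ∈ S <;> simp [hi, hjS]

end aux

/-- Structural step: if the quadratic form `h(x) = ∑ aᵢxᵢ² + ∑_{i<j} aᵢⱼxᵢxⱼ` in `n ≥ 4`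
variables vanishes on all 0/1 points with exactly `m` and exactly `m+1` ones (`m = ⌊n/2⌋`),
then all off-diagonal coefficients equal a common value `u` and each `aᵢ = −m·u`. -/
theorem stmt7 (n : ℕ) (hn : 4 ≤ n) (m : ℕ) (hm : m = n / 2)
    (a : Fin n → ℝ) (b : Fin n → Fin n → ℝ)
    (hvan : ∀ x : Fin n → ℝ, (∀ i, x i = 0 ∨ x i = 1) →
      ((univ.filter fun i => x i = 1).card = m ∨
       (univ.filter fun i => x i = 1).card = m + 1) →
      (∑ i : Fin n, a i * x i ^ 2) + ∑ i : Fin n, ∑ j ∈ Ioi i, b i j * x i * x j = 0) :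
    ∃ u : ℝ, (∀ i j : Fin n, i < j → b i j = u) ∧ ∀ i, a i = -(m : ℝ) * u := by
  have hm2 : 2 ≤ m := by omega
  have hF : ∀ S : Finset (Fin n), S.card = m ∨ S.card = m + 1 → Fval a b S = 0 := by
    intro S hS
    have hfil : univ.filter (fun i => (if i ∈ S then (1:ℝ) else 0) = 1) = S := by
      ext i; by_cases h : i ∈ S <;> simp [h]
    have := hvan (fun i => if i ∈ S then (1:ℝ) else 0)
      (fun i => by by_cases h : i ∈ S <;> simp [h])
      (by rw [hfil]; exact hS)
    rw [← eval_indicator a b S]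
    simpa using this
  -- key identity
  have key : ∀ (S : Finset (Fin n)) (i j : Fin n), S.card = m - 1 → i ∉ S → j ∉ S → i ≠ j →
      Bsym b i j = Fval a b S := by
    intro S i j hcard hiS hjS hij
    have hjiS : j ∉ insert i S := by simp [hjS, hij.symm]
    have h1 := Fval_insert a b S hiS
    have h2 := Fval_insert a b (insert i S) hjiS
    have h3 := Fval_insert a b S hjS
    rw [sum_insert hiS] at h2
    have c1 : Fval a b (insert i S) = 0 :=
      hF _ (Or.inl (by rw [card_insert_of_notMem hiS, hcard]; omega))
    have c2 : Fval a b (insert j (insert i S)) = 0 :=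
      hF _ (Or.inr (by rw [card_insert_of_notMem hjiS, card_insert_of_notMem hiS, hcard]; omega))
    have c3 : Fval a b (insert j S) = 0 :=
      hF _ (Or.inl (by rw [card_insert_of_notMem hjS, hcard]; omega))
    have hsym := Bsym_symm b hij
    linarith [h1, h2, h3, c1, c2, c3, hsym]
  -- triple lemma
  have hcard_univ : (univ : Finset (Fin n)).card = n := by simp
  have triple : ∀ i j k : Fin n, i ≠ j → i ≠ k → j ≠ k → Bsym b i j = Bsym b i k := by
    intro i j k hij hik hjk
    have hc3 : ({i, j, k} : Finset (Fin n)).card ≤ 3 := by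
      refine le_trans (card_insert_le _ _) ?_
      exact Nat.succ_le_succ (by simpa using card_insert_le j {k})
    have hc : m - 1 ≤ (univ \ {i, j, k} : Finset (Fin n)).card := by
      rw [card_sdiff_of_subset (subset_univ _), hcard_univ]; omega
    obtain ⟨S, hSsub, hScard⟩ := Finset.exists_subset_card_eq hc
    have hmem : ∀ p : Fin n, p ∈ S → p ∉ ({i, j, k} : Finset (Fin n)) := by
      intro p hp
      have := hSsub hp
      simp only [mem_sdiff] at this
      exact this.2
    have hi : i ∉ S := fun h => hmem i h (by simp)
    have hj : j ∉ S := fun h => hmem j h (by simp)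
    have hk : k ∉ S := fun h => hmem k h (by simp)
    rw [key S i j hScard hi hj hij, key S i k hScard hi hk hik]
  have allpairs : ∀ i j k l : Fin n, i ≠ j → k ≠ l → Bsym b i j = Bsym b k l := by
    intro i j k l hij hkl
    by_cases hik : i = k
    · subst hik
      by_cases hjl : j = l
      · subst hjl; rfl
      · exact triple i j l hij hkl hjl
    · by_cases hil : i = l
      · subst hil
        rw [Bsym_symm b hkl]
        by_cases hjk : j = k
        · subst hjk; rfl
        · exact triple i j k hij (fun h => hik h) hjk
      · by_cases hjk : j = k
        · subst hjk
          rw [Bsym_symm b hij]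
          exact triple j i l (fun h => hik h.symm) hkl hil
        · rw [triple i j k hij hik hjk, Bsym_symm b hik]
          exact triple k i l (fun h => hik h.symm) hkl hil
  set i0 : Fin n := ⟨0, by omega⟩
  set j0 : Fin n := ⟨1, by omega⟩
  have h01 : i0 ≠ j0 := by simp [i0, j0, Fin.ext_iff]
  refine ⟨Bsym b i0 j0, ?_, ?_⟩
  · intro i j hij
    have : Bsym b i j = Bsym b i0 j0 := allpairs i j i0 j0 (ne_of_lt hij) h01
    rwa [Bsym, if_pos hij] at this
  · intro k
    have hc : m ≤ (univ \ {k} : Finset (Fin n)).card := by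
      rw [card_sdiff_of_subset (subset_univ _), hcard_univ]; simp; omega
    obtain ⟨S, hSsub, hScard⟩ := Finset.exists_subset_card_eq hc
    have hk : k ∉ S := fun h => by
      have := hSsub h; simp at this
    have c1 : Fval a b S = 0 := hF _ (Or.inl hScard)
    have c2 : Fval a b (insert k S) = 0 :=
      hF _ (Or.inr (by rw [card_insert_of_notMem hk, hScard]))
    have h1 := Fval_insert a b S hk
    have hsum : ∑ j ∈ S, Bsym b k j = m * Bsym b i0 j0 := by
      rw [sum_congr rfl (fun j hj => allpairs k j i0 j0 (fun h => hk (h ▸ hj)) h01)]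
      rw [sum_const, hScard, nsmul_eq_mul]
    rw [c1, c2, hsum] at h1
    linarith
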